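/- If a cost game v : 2^C → ℝ with v(∅) = 0 is submodular (v(S∪{j}) − v(S) ≤ v(T∪{j}) − v(T) for all T ⊆ S ⊆ C∖{j} and j ∉ S), then its core is nonempty: there exists p ∈ ℝ^C with ∑_{j∈C} p_j = v(C) and ∑_{j∈S} p_j ≤ v(S) for all S ⊆ C. In particular, for any ordering σ of C, the marginal-cost vector p_{σ(k)} = v({σ(1),…,σ(k)}) − v({σ(1),…,σ(k−1)}) lies in the core. -/

import Mathlib

open Finset

theorem submodular_cost_game_core_nonempty_marginal
    (n : ℕ) (v : Finset (Fin n) → ℝ)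
    (hempty : v ∅ = 0)
    (hsub : ∀ (j : Fin n) (S T : Finset (Fin n)), T ⊆ S → j ∉ S →
      v (insert j S) - v S ≤ v (insert j T) - v T) :
    (∃ p : Fin n → ℝ,
      ∑ j, p j = v Finset.univ ∧ ∀ S : Finset (Fin n), ∑ j ∈ S, p j ≤ v S) ∧
    (∀ σ : Equiv.Perm (Fin n),
      let pref : ℕ → Finset (Fin n) := fun k =>
        Finset.univ.filter fun i => ((σ.symm i : Fin n) : ℕ) < k
      let p : Fin n → ℝ := fun i =>
        v (pref (((σ.symm i : Fin n) : ℕ) + 1)) - v (pref ((σ.symm i : Fin n) : ℕ))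
      ∑ j, p j = v Finset.univ ∧ ∀ S : Finset (Fin n), ∑ j ∈ S, p j ≤ v S) := by
  have second : ∀ σ : Equiv.Perm (Fin n),
      let pref : ℕ → Finset (Fin n) := fun k =>
        Finset.univ.filter fun i => ((σ.symm i : Fin n) : ℕ) < k
      let p : Fin n → ℝ := fun i =>
        v (pref (((σ.symm i : Fin n) : ℕ) + 1)) - v (pref ((σ.symm i : Fin n) : ℕ))
      ∑ j, p j = v Finset.univ ∧ ∀ S : Finset (Fin n), ∑ j ∈ S, p j ≤ v S := by
    intro σ pref p
    have hpref0 : pref 0 = ∅ := by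
      simp [pref]
    have hprefn : ∀ k, n ≤ k → pref k = Finset.univ := by
      intro k hk
      ext i
      simp only [pref, mem_filter, mem_univ, true_and, iff_true]
      exact lt_of_lt_of_le (σ.symm i).isLt hk
    have hstep : ∀ k (hk : k < n),
        pref (k + 1) = insert (σ ⟨k, hk⟩) (pref k) := by
      intro k hk
      ext i
      simp only [pref, mem_filter, mem_univ, true_and, mem_insert,
        Nat.lt_succ_iff_lt_or_eq]
      constructor
      · rintro (h | h)
        · exact Or.inr h
        · exact Or.inl ((Equiv.symm_apply_eq σ).mp (Fin.ext h))
      · rintro (h | h)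
        · subst h
          right
          simp
        · exact Or.inl h
    have hnotmem : ∀ k (hk : k < n), σ ⟨k, hk⟩ ∉ pref k := by
      intro k hk
      simp [pref]
    have hpval : ∀ k (hk : k < n),
        p (σ ⟨k, hk⟩) = v (pref (k + 1)) - v (pref k) := by
      intro k hk
      simp [p, Equiv.symm_apply_apply]
    -- key inductive claim
    have key : ∀ (S : Finset (Fin n)) (k : ℕ),
        ∑ j ∈ S ∩ pref k, p j ≤ v (S ∩ pref k) := by
      intro S k
      induction k with
      | zero => simp [hpref0, hempty]
      | succ k ih =>
        by_cases hk : k < n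
        · rw [hstep k hk]
          by_cases hjS : σ ⟨k, hk⟩ ∈ S
          · have hins : S ∩ insert (σ ⟨k, hk⟩) (pref k)
                = insert (σ ⟨k, hk⟩) (S ∩ pref k) := by
              ext i
              simp only [mem_inter, mem_insert]
              constructor
              · rintro ⟨hi, (rfl | hi')⟩
                · exact Or.inl rfl
                · exact Or.inr ⟨hi, hi'⟩
              · rintro (rfl | ⟨hi, hi'⟩)
                · exact ⟨hjS, Or.inl rfl⟩
                · exact ⟨hi, Or.inr hi'⟩
            rw [hins]
            have hjnot : σ ⟨k, hk⟩ ∉ S ∩ pref k := by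
              simp [hnotmem k hk]
            rw [Finset.sum_insert hjnot]
            have hsub' := hsub (σ ⟨k, hk⟩) (pref k) (S ∩ pref k)
              (inter_subset_right) (hnotmem k hk)
            rw [← hstep k hk] at hsub'
            have := hpval k hk
            linarith [ih]
          · have hins : S ∩ insert (σ ⟨k, hk⟩) (pref k) = S ∩ pref k := by
              ext i
              simp only [mem_inter, mem_insert]
              constructor
              · rintro ⟨hi, hi' | hi'⟩
                · exact absurd (hi' ▸ hi) hjS
                · exact ⟨hi, hi'⟩
              · rintro ⟨hi, hi'⟩; exact ⟨hi, Or.inr hi'⟩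
            rw [hins]
            exact ih
        · have h1 : pref (k + 1) = pref k := by
            rw [hprefn k (le_of_not_gt hk), hprefn (k + 1) (le_trans (le_of_not_gt hk) (Nat.le_succ k))]
          rw [h1]
          exact ih
    constructor
    · -- telescoping sum
      have hre : ∑ j, p j = ∑ k : Fin n, p (σ k) := (Equiv.sum_comp σ p).symm
      rw [hre]
      have : ∀ k : Fin n, p (σ k) = v (pref ((k : ℕ) + 1)) - v (pref (k : ℕ)) := by
        intro k
        simp [p, Equiv.symm_apply_apply]
      rw [Finset.sum_congr rfl (fun k _ => this k)]
      rw [Fin.sum_univ_eq_sum_range (fun k => v (pref (k + 1)) - v (pref k)) n]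
      rw [Finset.sum_range_sub (fun k => v (pref k)) n]
      rw [hpref0, hprefn n le_rfl, hempty, sub_zero]
    · intro S
      have := key S n
      rwa [hprefn n le_rfl, inter_univ] at this
  refine ⟨?_, second⟩
  have h := second 1
  exact ⟨_, h⟩
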